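/- Let x₀ < x₁ be real numbers, and for each n let J_n ⊆ [x₀, x₁] be a measurable set and U_n, V_n be jointly measurable stochastic processes indexed by J_n. Let p ≥ 1, r > 1 and r' satisfy 1/r = 1 − 1/r', and set q' = p r'. Assume there exists K such that sup_{a∈J_n} E|U_n(a)|^{q'} ≤ K and sup_{a∈J_n} E|V_n(a)|^{q'} ≤ K for all n, and that there exist γ > r/6 and K' > 0 such that P(U_n(a) ≠ V_n(a)) ≤ K' n^{−γ} for every n and every a ∈ J_n. Then ∫_{J_n} |U_n(a)|^p da = ∫_{J_n} |V_n(a)|^p da + o_P(n^{−1/6}), i.e., for every ε > 0, P(n^{1/6} |∫_{J_n} |U_n(a)|^p da − ∫_{J_n} |V_n(a)|^p da| > ε) → 0 as n → ∞. -/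

import Mathlib

open MeasureTheory ProbabilityTheory Real Set Filter

noncomputable section


/-- For nonnegative measurable `f g`, `ofReal |∫f - ∫g| ≤ ∫⁻ ofReal |f-g|`,
valid even without integrability (Bochner integral defaults to 0). -/
lemma aux_abs_integral_sub {α : Type*} [MeasurableSpace α] (μ : Measure α)
    {f g : α → ℝ} (hf : Measurable f) (hg : Measurable g) (hf0 : ∀ x, 0 ≤ f x)
    (hg0 : ∀ x, 0 ≤ g x) :
    ENNReal.ofReal |(∫ x, f x ∂μ) - ∫ x, g x ∂μ| ≤ ∫⁻ x, ENNReal.ofReal |f x - g x| ∂μ := by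
  have key : ∀ {f g : α → ℝ}, Measurable f → Measurable g → (∀ x, 0 ≤ f x) → (∀ x, 0 ≤ g x) →
      Integrable f μ → ¬ Integrable g μ → (∫⁻ x, ENNReal.ofReal |f x - g x| ∂μ) = ⊤ := by
    intro f g hf hg hf0 hg0 hfi hgi
    by_contra h
    have hle : ∀ x, ENNReal.ofReal (g x) ≤
        ENNReal.ofReal (f x) + ENNReal.ofReal |f x - g x| := fun x => by
      rw [← ENNReal.ofReal_add (hf0 x) (abs_nonneg _)]
      refine ENNReal.ofReal_le_ofReal ?_
      have h1 : g x - f x ≤ |f x - g x| := by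
        rw [abs_sub_comm]; exact le_abs_self _
      linarith
    have h1 : (∫⁻ x, ENNReal.ofReal (g x) ∂μ) ≤
        (∫⁻ x, ENNReal.ofReal (f x) ∂μ) + ∫⁻ x, ENNReal.ofReal |f x - g x| ∂μ := by
      rw [← lintegral_add_left hf.ennreal_ofReal]
      exact lintegral_mono hle
    have h2 : (∫⁻ x, ENNReal.ofReal (f x) ∂μ) ≠ ⊤ :=
      (lintegral_ofReal_ne_top_iff_integrable hf.aestronglyMeasurable
        (Eventually.of_forall hf0)).2 hfi
    have h3 : (∫⁻ x, ENNReal.ofReal (g x) ∂μ) = ⊤ := by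
      by_contra h3
      exact hgi ((lintegral_ofReal_ne_top_iff_integrable hg.aestronglyMeasurable
        (Eventually.of_forall hg0)).1 h3)
    rw [h3, top_le_iff] at h1
    rcases ENNReal.add_eq_top.1 h1 with h4 | h4
    · exact h2 h4
    · exact h h4
  by_cases hfi : Integrable f μ <;> by_cases hgi : Integrable g μ
  · have hsub : Integrable (fun x => f x - g x) μ := hfi.sub hgi
    calc ENNReal.ofReal |(∫ x, f x ∂μ) - ∫ x, g x ∂μ|
        = ENNReal.ofReal |∫ x, (f x - g x) ∂μ| := by rw [integral_sub hfi hgi]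
      _ ≤ ENNReal.ofReal (∫ x, |f x - g x| ∂μ) := by
          refine ENNReal.ofReal_le_ofReal ?_
          simpa [Real.norm_eq_abs] using norm_integral_le_integral_norm fun x => f x - g x
      _ = ∫⁻ x, ENNReal.ofReal |f x - g x| ∂μ :=
          ofReal_integral_eq_lintegral_ofReal hsub.abs
            (Eventually.of_forall fun x => abs_nonneg _)
  · rw [key hf hg hf0 hg0 hfi hgi]; exact le_top
  · have h := key hg hf hg0 hf0 hgi hfi
    have he : (∫⁻ x, ENNReal.ofReal |f x - g x| ∂μ) = ∫⁻ x, ENNReal.ofReal |g x - f x| ∂μ := by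
      refine lintegral_congr fun x => ?_
      rw [abs_sub_comm]
    rw [he, h]; exact le_top
  · rw [integral_undef hfi, integral_undef hgi]
    simp

/-- Lemma 6, case (ii): if `U_n`, `V_n` are processes on `J_n ⊆ [x₀, x₁]` with
uniformly bounded moments of order `q' = p r'` (where `1/r = 1 − 1/r'`) and
`P(U_n(a) ≠ V_n(a)) ≤ K' n^{−γ}` for some `γ > r/6`, then
`∫_{J_n} |U_n(a)|^p da = ∫_{J_n} |V_n(a)|^p da + o_P(n^{−1/6})`. -/
theorem stmt_9 (x₀ x₁ : ℝ) (hx : x₀ < x₁) (p r r' : ℝ) (hp : 1 ≤ p) (hr : 1 < r)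
    (hrr' : 1 / r = 1 - 1 / r')
    (J : ℕ → Set ℝ) (hJm : ∀ n, MeasurableSet (J n)) (hJsub : ∀ n, J n ⊆ Icc x₀ x₁)
    (Ω : Type) [MeasurableSpace Ω] (P : Measure Ω) (hP : IsProbabilityMeasure P)
    (U V : ℕ → ℝ → Ω → ℝ)
    (hUm : ∀ n, Measurable (Function.uncurry (U n)))
    (hVm : ∀ n, Measurable (Function.uncurry (V n)))
    (K : ℝ)
    -- uniformly bounded moments of order `q' = p r'`
    (hU : ∀ n, ∀ a ∈ J n,
      ∫⁻ ω, ENNReal.ofReal (|U n a ω| ^ (p * r')) ∂P ≤ ENNReal.ofReal K)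
    (hV : ∀ n, ∀ a ∈ J n,
      ∫⁻ ω, ENNReal.ofReal (|V n a ω| ^ (p * r')) ∂P ≤ ENNReal.ofReal K)
    -- `P(U_n(a) ≠ V_n(a)) ≤ K' n^{−γ}` with `γ > r/6`
    (γ K' : ℝ) (hγ : r / 6 < γ) (hK' : 0 < K')
    (hne : ∀ n : ℕ, ∀ a ∈ J n,
      P {ω | U n a ω ≠ V n a ω} ≤ ENNReal.ofReal (K' * (n:ℝ) ^ (-γ))) :
    ∀ ε : ℝ, 0 < ε →
      Tendsto (fun n : ℕ => P {ω | ε < (n:ℝ) ^ ((1:ℝ)/6) *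
        |(∫ a in J n, |U n a ω| ^ p) - ∫ a in J n, |V n a ω| ^ p|}) atTop (nhds 0) := by
  intro ε hε
  -- exponent facts
  have hr0 : (0:ℝ) < r := lt_trans one_pos hr
  have h1r : (0:ℝ) < 1 / r := by positivity
  have h1r1 : 1 / r < 1 := by rw [div_lt_one hr0]; exact hr
  have h1r'0 : (0:ℝ) < 1 / r' := by rw [hrr'] at h1r1; linarith
  have hr'0 : (0:ℝ) < r' := by
    rcases lt_trichotomy r' 0 with h | h | h
    · exfalso; have : 1 / r' < 0 := div_neg_of_pos_of_neg one_pos h; linarith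
    · exfalso; rw [h] at h1r'0; simp at h1r'0
    · exact h
  have hr' : 1 < r' := by
    have h2 : 1 / r' < 1 := by rw [hrr'] at h1r; linarith
    rwa [div_lt_one hr'0] at h2
  have hconj : r'.HolderConjugate r := by
    refine Real.holderConjugate_iff.mpr ⟨hr', ?_⟩
    have h2 := hrr'
    rw [one_div, one_div] at h2
    rw [h2]; ring
  -- the constant C₂ (Hölder bound on the r'-moment of the difference)
  set C₂ : ENNReal := ((2:ENNReal) ^ (r' - 1) * (ENNReal.ofReal K + ENNReal.ofReal K)) ^ (1/r')
    with hC₂def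
  have hC₂top : C₂ ≠ ⊤ := by
    apply ENNReal.rpow_ne_top_of_nonneg (by positivity)
    exact ENNReal.mul_ne_top
      (ENNReal.rpow_ne_top_of_nonneg (by linarith) ENNReal.ofNat_ne_top)
      (ENNReal.add_ne_top.2 ⟨ENNReal.ofReal_ne_top, ENNReal.ofReal_ne_top⟩)
  -- measurability helpers
  have hUω : ∀ n a, Measurable (fun ω => U n a ω) := fun n a =>
    (hUm n).comp measurable_prodMk_left
  have hVω : ∀ n a, Measurable (fun ω => V n a ω) := fun n a =>
    (hVm n).comp measurable_prodMk_left
  have hUa : ∀ n ω, Measurable (fun a => U n a ω) := fun n ω =>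
    (hUm n).comp measurable_prodMk_right
  have hVa : ∀ n ω, Measurable (fun a => V n a ω) := fun n ω =>
    (hVm n).comp measurable_prodMk_right
  -- measurability of the random variables D n
  have hDmeas : ∀ n, Measurable (fun ω =>
      (∫ a in J n, |U n a ω| ^ p) - ∫ a in J n, |V n a ω| ^ p) := by
    intro n
    have hUint : StronglyMeasurable (fun ω => ∫ a in J n, |U n a ω| ^ p) := by
      have hf : StronglyMeasurable (fun q : ℝ × Ω => |U n q.1 q.2| ^ p) := by
        apply Measurable.stronglyMeasurable
        have : Measurable (fun q : ℝ × Ω => U n q.1 q.2) := hUm n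
        fun_prop
      exact hf.integral_prod_left'
    have hVint : StronglyMeasurable (fun ω => ∫ a in J n, |V n a ω| ^ p) := by
      have hf : StronglyMeasurable (fun q : ℝ × Ω => |V n q.1 q.2| ^ p) := by
        apply Measurable.stronglyMeasurable
        have : Measurable (fun q : ℝ × Ω => V n q.1 q.2) := hVm n
        fun_prop
      exact hf.integral_prod_left'
    exact (hUint.measurable).sub (hVint.measurable)
  -- the main bound
  have hbound : ∀ n : ℕ, P {ω | ε < (n:ℝ) ^ ((1:ℝ)/6) *
        |(∫ a in J n, |U n a ω| ^ p) - ∫ a in J n, |V n a ω| ^ p|} ≤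
      (C₂ * ENNReal.ofReal (x₁ - x₀) / ENNReal.ofReal ε) *
        ENNReal.ofReal ((n:ℝ) ^ ((1:ℝ)/6) * (K' * (n:ℝ) ^ (-γ)) ^ (1/r)) := by
    intro n
    set c : ℝ := (n:ℝ) ^ ((1:ℝ)/6) with hc
    have hc0 : 0 ≤ c := Real.rpow_nonneg (Nat.cast_nonneg n) _
    set D : Ω → ℝ := fun ω =>
      (∫ a in J n, |U n a ω| ^ p) - ∫ a in J n, |V n a ω| ^ p with hD
    -- Markov
    have markov : P {ω | ε < c * |D ω|} ≤
        (∫⁻ ω, ENNReal.ofReal (c * |D ω|) ∂P) / ENNReal.ofReal ε := by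
      refine le_trans (measure_mono ?_) (meas_ge_le_lintegral_div ?_ ?_ ?_)
      · intro ω hω
        exact ENNReal.ofReal_le_ofReal (le_of_lt hω)
      · exact (((hDmeas n).abs.const_mul c).ennreal_ofReal).aemeasurable
      · simpa using hε
      · exact ENNReal.ofReal_ne_top
    -- pull out the constant c
    have hpull : (∫⁻ ω, ENNReal.ofReal (c * |D ω|) ∂P) =
        ENNReal.ofReal c * ∫⁻ ω, ENNReal.ofReal |D ω| ∂P := by
      simp_rw [ENNReal.ofReal_mul hc0]
      exact lintegral_const_mul _ ((hDmeas n).abs.ennreal_ofReal)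
    -- bound |D| by the double lintegral
    have habs : (∫⁻ ω, ENNReal.ofReal |D ω| ∂P) ≤
        ∫⁻ ω, ∫⁻ a in J n, ENNReal.ofReal (|(|U n a ω| ^ p) - |V n a ω| ^ p|) ∂volume ∂P := by
      refine lintegral_mono fun ω => ?_
      exact aux_abs_integral_sub _ (by have := hUa n ω; fun_prop)
        (by have := hVa n ω; fun_prop)
        (fun a => Real.rpow_nonneg (abs_nonneg _) _)
        (fun a => Real.rpow_nonneg (abs_nonneg _) _)
    -- swap the integrals (Tonelli)
    have hswap : (∫⁻ ω, ∫⁻ a in J n,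
          ENNReal.ofReal (|(|U n a ω| ^ p) - |V n a ω| ^ p|) ∂volume ∂P) =
        ∫⁻ a in J n, ∫⁻ ω,
          ENNReal.ofReal (|(|U n a ω| ^ p) - |V n a ω| ^ p|) ∂P ∂volume := by
      apply lintegral_lintegral_swap
      apply Measurable.aemeasurable
      have h1 : Measurable (fun q : Ω × ℝ => U n q.2 q.1) :=
        (hUm n).comp measurable_swap
      have h2 : Measurable (fun q : Ω × ℝ => V n q.2 q.1) :=
        (hVm n).comp measurable_swap
      fun_prop
    -- the inner (Hölder) bound
    have hinner : ∀ a ∈ J n, (∫⁻ ω,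
          ENNReal.ofReal (|(|U n a ω| ^ p) - |V n a ω| ^ p|) ∂P) ≤
        C₂ * ENNReal.ofReal ((K' * (n:ℝ) ^ (-γ)) ^ (1/r)) := by
      intro a ha
      set S : Set Ω := {ω | U n a ω ≠ V n a ω} with hS
      have hSm : MeasurableSet S := by
        have : S = (fun ω => U n a ω - V n a ω) ⁻¹' {0}ᶜ := by
          ext ω; simp [hS, sub_eq_zero]
        rw [this]
        exact ((hUω n a).sub (hVω n a)) (measurableSet_singleton 0).compl
      set F : Ω → ENNReal := fun ω => ENNReal.ofReal (|(|U n a ω| ^ p) - |V n a ω| ^ p|) with hF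
      have hFmeas : Measurable F := by
        have h1 := hUω n a; have h2 := hVω n a; fun_prop
      have hprod : ∀ ω, F ω = (F * S.indicator (fun _ => (1:ENNReal))) ω := by
        intro ω
        by_cases hω : U n a ω = V n a ω
        · have h1 : F ω = 0 := by simp [hF, hω]
          have h2 : ω ∉ S := by simp [hS, hω]
          simp [h1, h2]
        · have h2 : ω ∈ S := hω
          simp [Pi.mul_apply, Set.indicator_of_mem h2]
      have hholder : (∫⁻ ω, F ω ∂P) ≤
          (∫⁻ ω, F ω ^ r' ∂P) ^ (1/r') * (∫⁻ ω, S.indicator (fun _ => (1:ENNReal)) ω ^ r ∂P) ^ (1/r) := by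
        rw [lintegral_congr hprod]
        exact ENNReal.lintegral_mul_le_Lp_mul_Lq P hconj hFmeas.aemeasurable
          ((measurable_one.indicator hSm).aemeasurable)
      -- indicator part
      have hind : (∫⁻ ω, S.indicator (fun _ => (1:ENNReal)) ω ^ r ∂P) = P S := by
        have heq : ∀ ω, S.indicator (fun _ => (1:ENNReal)) ω ^ r
            = S.indicator (fun _ => (1:ENNReal)) ω := by
          intro ω
          by_cases hω : ω ∈ S
          · rw [Set.indicator_of_mem hω, ENNReal.one_rpow]
          · rw [Set.indicator_of_notMem hω, ENNReal.zero_rpow_of_pos hr0]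
        simp_rw [heq]
        exact lintegral_indicator_one hSm
      have hindle : (∫⁻ ω, S.indicator (fun _ => (1:ENNReal)) ω ^ r ∂P) ^ (1/r) ≤
          ENNReal.ofReal ((K' * (n:ℝ) ^ (-γ)) ^ (1/r)) := by
        rw [hind, ← ENNReal.ofReal_rpow_of_nonneg
          (by positivity) (le_of_lt h1r)]
        exact ENNReal.rpow_le_rpow (hne n a ha) (le_of_lt h1r)
      -- moment part
      have hmom : (∫⁻ ω, F ω ^ r' ∂P) ^ (1/r') ≤ C₂ := by
        rw [hC₂def]
        refine ENNReal.rpow_le_rpow ?_ (by positivity)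
        have hpt : ∀ ω, F ω ^ r' ≤ (2:ENNReal) ^ (r' - 1) *
            (ENNReal.ofReal (|U n a ω| ^ (p * r')) +
             ENNReal.ofReal (|V n a ω| ^ (p * r'))) := by
          intro ω
          have h1 : F ω ≤ ENNReal.ofReal (|U n a ω| ^ p) +
              ENNReal.ofReal (|V n a ω| ^ p) := by
            rw [hF, ← ENNReal.ofReal_add (Real.rpow_nonneg (abs_nonneg _) _)
              (Real.rpow_nonneg (abs_nonneg _) _)]
            refine ENNReal.ofReal_le_ofReal ?_
            have := abs_sub (|U n a ω| ^ p) (|V n a ω| ^ p)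
            rwa [abs_of_nonneg (Real.rpow_nonneg (abs_nonneg _) _),
              abs_of_nonneg (Real.rpow_nonneg (abs_nonneg _) _)] at this
          calc F ω ^ r' ≤ (ENNReal.ofReal (|U n a ω| ^ p) +
                ENNReal.ofReal (|V n a ω| ^ p)) ^ r' :=
              ENNReal.rpow_le_rpow h1 (le_of_lt hr'0)
            _ ≤ (2:ENNReal) ^ (r' - 1) * ((ENNReal.ofReal (|U n a ω| ^ p)) ^ r' +
                (ENNReal.ofReal (|V n a ω| ^ p)) ^ r') :=
              ENNReal.rpow_add_le_mul_rpow_add_rpow _ _ (le_of_lt hr')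
            _ = (2:ENNReal) ^ (r' - 1) * (ENNReal.ofReal (|U n a ω| ^ (p * r')) +
                ENNReal.ofReal (|V n a ω| ^ (p * r'))) := by
              rw [ENNReal.ofReal_rpow_of_nonneg (Real.rpow_nonneg (abs_nonneg _) _)
                  (le_of_lt hr'0),
                ENNReal.ofReal_rpow_of_nonneg (Real.rpow_nonneg (abs_nonneg _) _)
                  (le_of_lt hr'0),
                ← Real.rpow_mul (abs_nonneg _), ← Real.rpow_mul (abs_nonneg _)]
        calc (∫⁻ ω, F ω ^ r' ∂P) ≤ ∫⁻ ω, (2:ENNReal) ^ (r' - 1) *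
              (ENNReal.ofReal (|U n a ω| ^ (p * r')) +
               ENNReal.ofReal (|V n a ω| ^ (p * r'))) ∂P := lintegral_mono hpt
          _ = (2:ENNReal) ^ (r' - 1) * ((∫⁻ ω, ENNReal.ofReal (|U n a ω| ^ (p * r')) ∂P) +
              ∫⁻ ω, ENNReal.ofReal (|V n a ω| ^ (p * r')) ∂P) := by
            rw [lintegral_const_mul _ (by
              have h1 := hUω n a; have h2 := hVω n a; fun_prop),
              lintegral_add_left (by have h1 := hUω n a; fun_prop)]
          _ ≤ (2:ENNReal) ^ (r' - 1) * (ENNReal.ofReal K + ENNReal.ofReal K) := by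
            exact mul_le_mul_right (add_le_add (hU n a ha) (hV n a ha)) _
      calc (∫⁻ ω, F ω ∂P) ≤ (∫⁻ ω, F ω ^ r' ∂P) ^ (1/r') *
            (∫⁻ ω, S.indicator (fun _ => (1:ENNReal)) ω ^ r ∂P) ^ (1/r) := hholder
        _ ≤ C₂ * ENNReal.ofReal ((K' * (n:ℝ) ^ (-γ)) ^ (1/r)) :=
          mul_le_mul' hmom hindle
    -- integrate the inner bound over J n
    have houter : (∫⁻ a in J n, ∫⁻ ω,
          ENNReal.ofReal (|(|U n a ω| ^ p) - |V n a ω| ^ p|) ∂P ∂volume) ≤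
        ENNReal.ofReal (x₁ - x₀) * (C₂ * ENNReal.ofReal ((K' * (n:ℝ) ^ (-γ)) ^ (1/r))) := by
      calc (∫⁻ a in J n, ∫⁻ ω,
            ENNReal.ofReal (|(|U n a ω| ^ p) - |V n a ω| ^ p|) ∂P ∂volume) ≤
          ∫⁻ _ in J n, C₂ * ENNReal.ofReal ((K' * (n:ℝ) ^ (-γ)) ^ (1/r)) ∂volume :=
            setLIntegral_mono' (hJm n) hinner
        _ = C₂ * ENNReal.ofReal ((K' * (n:ℝ) ^ (-γ)) ^ (1/r)) * volume (J n) := by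
            rw [setLIntegral_const]
        _ ≤ C₂ * ENNReal.ofReal ((K' * (n:ℝ) ^ (-γ)) ^ (1/r)) * ENNReal.ofReal (x₁ - x₀) := by
            refine mul_le_mul_right ?_ _
            calc volume (J n) ≤ volume (Icc x₀ x₁) := measure_mono (hJsub n)
              _ = ENNReal.ofReal (x₁ - x₀) := Real.volume_Icc
        _ = ENNReal.ofReal (x₁ - x₀) * (C₂ * ENNReal.ofReal ((K' * (n:ℝ) ^ (-γ)) ^ (1/r))) := by
            ring
    -- assemble
    calc P {ω | ε < c * |D ω|} ≤
        (∫⁻ ω, ENNReal.ofReal (c * |D ω|) ∂P) / ENNReal.ofReal ε := markov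
      _ = ENNReal.ofReal c * (∫⁻ ω, ENNReal.ofReal |D ω| ∂P) / ENNReal.ofReal ε := by
          rw [hpull]
      _ ≤ ENNReal.ofReal c * (ENNReal.ofReal (x₁ - x₀) *
            (C₂ * ENNReal.ofReal ((K' * (n:ℝ) ^ (-γ)) ^ (1/r)))) / ENNReal.ofReal ε := by
          refine ENNReal.div_le_div_right (mul_le_mul_right ?_ _) _
          exact le_trans habs (le_trans (le_of_eq hswap) houter)
      _ = (C₂ * ENNReal.ofReal (x₁ - x₀) / ENNReal.ofReal ε) *
            ENNReal.ofReal (c * (K' * (n:ℝ) ^ (-γ)) ^ (1/r)) := by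
          rw [ENNReal.ofReal_mul hc0]
          rw [ENNReal.div_eq_inv_mul, ENNReal.div_eq_inv_mul]
          ring
  -- the bound sequence tends to 0
  have hB : Tendsto (fun n : ℕ => (C₂ * ENNReal.ofReal (x₁ - x₀) / ENNReal.ofReal ε) *
      ENNReal.ofReal ((n:ℝ) ^ ((1:ℝ)/6) * (K' * (n:ℝ) ^ (-γ)) ^ (1/r))) atTop (nhds 0) := by
    have hreal : Tendsto (fun n : ℕ =>
        (n:ℝ) ^ ((1:ℝ)/6) * (K' * (n:ℝ) ^ (-γ)) ^ (1/r)) atTop (nhds 0) := by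
      have hexp : (0:ℝ) < γ / r - 1/6 := by
        have : 1/6 < γ / r := by
          rw [lt_div_iff₀ hr0]; linarith
        linarith
      have h0 : Tendsto (fun n : ℕ => K' ^ (1/r) * (n:ℝ) ^ (-(γ / r - 1/6))) atTop
          (nhds (K' ^ (1/r) * 0)) := by
        exact Tendsto.const_mul _
          ((tendsto_rpow_neg_atTop hexp).comp tendsto_natCast_atTop_atTop)
      rw [mul_zero] at h0
      refine h0.congr' ?_
      filter_upwards [eventually_ge_atTop 1] with n hn
      have hnpos : (0:ℝ) < (n:ℝ) := by exact_mod_cast hn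
      have hexp2 : -(γ / r - 1/6) = (1:ℝ)/6 + (-γ) * (1/r) := by ring
      rw [Real.mul_rpow (le_of_lt hK') (Real.rpow_nonneg (le_of_lt hnpos) _),
        ← Real.rpow_mul (le_of_lt hnpos), hexp2, Real.rpow_add hnpos]
      ring
    have hconst : (C₂ * ENNReal.ofReal (x₁ - x₀) / ENNReal.ofReal ε) ≠ ⊤ := by
      refine (ENNReal.div_lt_top ?_ ?_).ne
      · exact ENNReal.mul_ne_top hC₂top ENNReal.ofReal_ne_top
      · simpa using hε
    have := ENNReal.Tendsto.const_mul (ENNReal.tendsto_ofReal hreal) (Or.inr hconst)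
    simpa using this
  exact tendsto_of_tendsto_of_tendsto_of_le_of_le tendsto_const_nhds hB
    (fun n => zero_le (a := _)) hbound
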